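/- arXiv:2305.16358 — 2 statements merged into one kernel-verified Lean document; each statement's English description precedes it below -/
import Mathlib

section
/- Let C ⊆ ℝ^d be a nonempty compact convex set with support function F(θ) = sup_{y∈C} ⟨θ, y⟩, and let C(p) ⊆ C be a nonempty compact convex subset. Let θ ∈ ℝ^d be a point at which the maximizer y*(θ) = argmax_{y∈C} ⟨θ, y⟩ and the constrained maximizer y*(θ; p) = argmax_{y∈C(p)} ⟨θ, y⟩ are both unique. Then the partial Fenchel–Young loss L̄_FY(·, p) is differentiable at θ with gradient ∇_θ L̄_FY(θ, p) = y*(θ) − y*(θ; p). -/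
open RealInnerProductSpace Set

/-- The support function of a set `C`: `F(θ) = sup_{y ∈ C} ⟨θ, y⟩`. -/
noncomputable def suppFn {d : ℕ} (C : Set (EuclideanSpace ℝ (Fin d)))
    (θ : EuclideanSpace ℝ (Fin d)) : ℝ :=
  sSup ((fun y => ⟪θ, y⟫) '' C)

/-- The partial Fenchel–Young loss:
`L̄_FY(θ, p) = min_{y ∈ C(p)} (F(θ) − ⟨θ, y⟩)`, where `F` is the support function of `C`. -/
noncomputable def partialFY {d : ℕ} (C Cp : Set (EuclideanSpace ℝ (Fin d)))
    (θ : EuclideanSpace ℝ (Fin d)) : ℝ :=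
  sInf ((fun y => suppFn C θ - ⟪θ, y⟫) '' Cp)

lemma suppFn_eq_of_isMax {d : ℕ} {C : Set (EuclideanSpace ℝ (Fin d))}
    {θ y : EuclideanSpace ℝ (Fin d)} (hy : y ∈ C)
    (hmax : ∀ z ∈ C, ⟪θ, z⟫ ≤ ⟪θ, y⟫) : suppFn C θ = ⟪θ, y⟫ := by
  apply IsGreatest.csSup_eq
  refine ⟨⟨y, hy, rfl⟩, ?_⟩
  rintro _ ⟨z, hz, rfl⟩
  exact hmax z hz

lemma exists_max {d : ℕ} {C : Set (EuclideanSpace ℝ (Fin d))}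
    (hCne : C.Nonempty) (hCcpt : IsCompact C) (θ : EuclideanSpace ℝ (Fin d)) :
    ∃ y ∈ C, ∀ z ∈ C, ⟪θ, z⟫ ≤ ⟪θ, y⟫ := by
  have hcont : Continuous fun y : EuclideanSpace ℝ (Fin d) => (⟪θ, y⟫ : ℝ) :=
    continuous_const.inner continuous_id
  obtain ⟨y, hy, hmax⟩ := hCcpt.exists_isMaxOn hCne hcont.continuousOn
  exact ⟨y, hy, fun z hz => hmax hz⟩

/-- Key stability lemma: maximizers for nearby `θ'` are close to the unique maximizer at `θ`. -/
lemma max_stability {d : ℕ} {C : Set (EuclideanSpace ℝ (Fin d))}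
    (hCcpt : IsCompact C)
    {θ ystar : EuclideanSpace ℝ (Fin d)}
    (hy : ystar ∈ C) (hymax : ∀ y ∈ C, ⟪θ, y⟫ ≤ ⟪θ, ystar⟫)
    (hyuniq : ∀ y ∈ C, (∀ y' ∈ C, ⟪θ, y'⟫ ≤ ⟪θ, y⟫) → y = ystar)
    {ε : ℝ} (hε : 0 < ε) :
    ∃ δ > 0, ∀ θ' : EuclideanSpace ℝ (Fin d), ‖θ' - θ‖ < δ →
      ∀ y' ∈ C, (∀ z ∈ C, ⟪θ', z⟫ ≤ ⟪θ', y'⟫) → ‖y' - ystar‖ ≤ ε := by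
  -- bound on C
  obtain ⟨R, hR⟩ := hCcpt.isBounded.subset_closedBall 0
  have hR0 : (0:ℝ) ≤ R := le_trans (norm_nonneg ystar) (by simpa using hR hy)
  have hnorm : ∀ y ∈ C, ‖y‖ ≤ R := fun y hy => by simpa using hR hy
  set K : Set (EuclideanSpace ℝ (Fin d)) := C ∩ {y | ε ≤ ‖y - ystar‖} with hK
  by_cases hKne : K.Nonempty
  · have hKcpt : IsCompact K := hCcpt.inter_right
      (isClosed_le continuous_const ((continuous_id.sub continuous_const).norm))
    have hcont : Continuous fun y : EuclideanSpace ℝ (Fin d) => (⟪θ, y⟫ : ℝ) :=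
      continuous_const.inner continuous_id
    obtain ⟨y₀, hy₀K, hy₀max⟩ := hKcpt.exists_isMaxOn hKne hcont.continuousOn
    have hy₀C : y₀ ∈ C := hy₀K.1
    have hy₀ne : y₀ ≠ ystar := by
      intro h
      have := hy₀K.2
      rw [h] at this
      simp only [mem_setOf_eq, sub_self, norm_zero] at this
      linarith
    have hlt : ⟪θ, y₀⟫ < ⟪θ, ystar⟫ := by
      rcases lt_or_eq_of_le (hymax y₀ hy₀C) with h | h
      · exact h
      · exfalso; apply hy₀ne
        apply hyuniq y₀ hy₀C
        intro y' hy'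
        calc ⟪θ, y'⟫ ≤ ⟪θ, ystar⟫ := hymax y' hy'
          _ = ⟪θ, y₀⟫ := h.symm
    set g : ℝ := ⟪θ, ystar⟫ - ⟪θ, y₀⟫ with hg
    have hg0 : 0 < g := by rw [hg]; linarith
    refine ⟨g / (2 * R + 2), by positivity, ?_⟩
    intro θ' hθ' y' hy'C hy'max
    by_contra hcon
    push_neg at hcon
    have hy'K : y' ∈ K := ⟨hy'C, le_of_lt hcon⟩
    -- ⟪θ, y'⟫ ≥ ⟪θ, ystar⟫ - 2δR
    have h1 : ⟪θ', ystar⟫ ≤ ⟪θ', y'⟫ := hy'max ystar hy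
    have e1 : |⟪θ' - θ, y'⟫| ≤ ‖θ' - θ‖ * R := by
      calc |⟪θ' - θ, y'⟫| ≤ ‖θ' - θ‖ * ‖y'‖ := abs_real_inner_le_norm _ _
        _ ≤ ‖θ' - θ‖ * R := by
            exact mul_le_mul_of_nonneg_left (hnorm y' hy'C) (norm_nonneg _)
    have e2 : |⟪θ' - θ, ystar⟫| ≤ ‖θ' - θ‖ * R := by
      calc |⟪θ' - θ, ystar⟫| ≤ ‖θ' - θ‖ * ‖ystar‖ := abs_real_inner_le_norm _ _
        _ ≤ ‖θ' - θ‖ * R := by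
            exact mul_le_mul_of_nonneg_left (hnorm ystar hy) (norm_nonneg _)
    have hy'M : ⟪θ, y'⟫ ≤ ⟪θ, y₀⟫ := hy₀max hy'K
    have hsplit1 : ⟪θ', y'⟫ = ⟪θ, y'⟫ + ⟪θ' - θ, y'⟫ := by
      rw [← inner_add_left]; congr 1; abel
    have hsplit2 : ⟪θ', ystar⟫ = ⟪θ, ystar⟫ + ⟪θ' - θ, ystar⟫ := by
      rw [← inner_add_left]; congr 1; abel
    have hδR : ‖θ' - θ‖ * R < g / 2 := by
      rcases eq_or_lt_of_le hR0 with h | h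
      · rw [← h, mul_zero]; positivity
      · have h2 : ‖θ' - θ‖ * R < g / (2 * R + 2) * R :=
          mul_lt_mul_of_pos_right hθ' h
        have h3 : g / (2 * R + 2) * R ≤ g / 2 := by
          rw [div_mul_eq_mul_div, div_le_div_iff₀ (by positivity) (by norm_num)]
          nlinarith
        linarith
    have habs1 := abs_le.mp e1
    have habs2 := abs_le.mp e2
    -- combine
    have : ⟪θ, ystar⟫ - g + ⟪θ' - θ, y'⟫ - ⟪θ' - θ, ystar⟫ ≥ ⟪θ, ystar⟫ := by
      have := h1
      rw [hsplit1, hsplit2] at this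
      have h4 : ⟪θ, y'⟫ ≤ ⟪θ, ystar⟫ - g := by
        rw [hg]; linarith
      linarith
    linarith
  · -- K empty: every point of C is within ε
    refine ⟨1, one_pos, fun θ' _ y' hy'C _ => ?_⟩
    by_contra hcon
    push_neg at hcon
    exact hKne ⟨y', hy'C, le_of_lt hcon⟩

lemma suppFn_hasGradientAt {d : ℕ} {C : Set (EuclideanSpace ℝ (Fin d))}
    (hCne : C.Nonempty) (hCcpt : IsCompact C)
    {θ ystar : EuclideanSpace ℝ (Fin d)}
    (hy : ystar ∈ C) (hymax : ∀ y ∈ C, ⟪θ, y⟫ ≤ ⟪θ, ystar⟫)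
    (hyuniq : ∀ y ∈ C, (∀ y' ∈ C, ⟪θ, y'⟫ ≤ ⟪θ, y⟫) → y = ystar) :
    HasGradientAt (suppFn C) ystar θ := by
  rw [hasGradientAt_iff_isLittleO, Asymptotics.isLittleO_iff]
  intro c hc
  obtain ⟨δ, hδ0, hδ⟩ := max_stability hCcpt hy hymax hyuniq hc
  rw [Metric.eventually_nhds_iff]
  refine ⟨δ, hδ0, fun θ' hθ' => ?_⟩
  rw [dist_eq_norm] at hθ'
  obtain ⟨y', hy'C, hy'max⟩ := exists_max hCne hCcpt θ'
  have hclose : ‖y' - ystar‖ ≤ c := hδ θ' hθ' y' hy'C hy'max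
  have hF : suppFn C θ = ⟪θ, ystar⟫ := suppFn_eq_of_isMax hy hymax
  have hF' : suppFn C θ' = ⟪θ', y'⟫ := suppFn_eq_of_isMax hy'C hy'max
  set D : ℝ := suppFn C θ' - suppFn C θ - ⟪ystar, θ' - θ⟫ with hD
  have hsym : ⟪ystar, θ' - θ⟫ = ⟪θ' - θ, ystar⟫ := real_inner_comm _ _
  have hlow : 0 ≤ D := by
    have h1 : ⟪θ', ystar⟫ ≤ suppFn C θ' := by
      rw [hF']; exact hy'max ystar hy
    have h2 : ⟪θ', ystar⟫ = ⟪θ, ystar⟫ + ⟪θ' - θ, ystar⟫ := by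
      rw [← inner_add_left]; congr 1; abel
    rw [hD, hF, hsym]; linarith
  have hhigh : D ≤ c * ‖θ' - θ‖ := by
    have h1 : ⟪θ', y'⟫ = ⟪θ, y'⟫ + ⟪θ' - θ, y'⟫ := by
      rw [← inner_add_left]; congr 1; abel
    have h2 : ⟪θ, y'⟫ ≤ ⟪θ, ystar⟫ := hymax y' hy'C
    have h3 : ⟪θ' - θ, y' - ystar⟫ ≤ ‖θ' - θ‖ * ‖y' - ystar‖ := real_inner_le_norm _ _
    have h4 : ‖θ' - θ‖ * ‖y' - ystar‖ ≤ ‖θ' - θ‖ * c :=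
      mul_le_mul_of_nonneg_left hclose (norm_nonneg _)
    have h5 : ⟪θ' - θ, y' - ystar⟫ = ⟪θ' - θ, y'⟫ - ⟪θ' - θ, ystar⟫ := by
      rw [inner_sub_right]
    rw [hD, hF, hF', hsym]
    nlinarith [h3, h4]
  rw [Real.norm_eq_abs, abs_of_nonneg hlow]
  calc D ≤ c * ‖θ' - θ‖ := hhigh
    _ = c * ‖(fun x' => x' - θ) θ'‖ := rfl

lemma partialFY_eq_sub {d : ℕ} {C Cp : Set (EuclideanSpace ℝ (Fin d))}
    (hCpne : Cp.Nonempty) (hCpcpt : IsCompact Cp) (θ : EuclideanSpace ℝ (Fin d)) :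
    partialFY C Cp θ = suppFn C θ - suppFn Cp θ := by
  obtain ⟨y', hy'C, hy'max⟩ := exists_max hCpne hCpcpt θ
  have h1 : suppFn Cp θ = ⟪θ, y'⟫ := suppFn_eq_of_isMax hy'C hy'max
  have h2 : partialFY C Cp θ = suppFn C θ - ⟪θ, y'⟫ := by
    apply IsLeast.csInf_eq
    refine ⟨⟨y', hy'C, rfl⟩, ?_⟩
    rintro _ ⟨z, hz, rfl⟩
    have := hy'max z hz
    show suppFn C θ - ⟪θ, y'⟫ ≤ suppFn C θ - ⟪θ, z⟫
    linarith
  rw [h2, h1]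

/-- Let `C ⊆ ℝ^d` be a nonempty compact convex set, `C(p) ⊆ C` a nonempty
compact convex subset, and `θ` a point where the maximizer `y*(θ)` of `⟨θ, ·⟩` over `C` and
the constrained maximizer `y*(θ; p)` over `C(p)` are both unique. Then the partial
Fenchel–Young loss `L̄_FY(·, p)` is differentiable at `θ` with gradient `y*(θ) − y*(θ; p)`. -/
theorem partialFY_hasGradientAt {d : ℕ}
    (C Cp : Set (EuclideanSpace ℝ (Fin d)))
    (hCne : C.Nonempty) (hCcpt : IsCompact C) (hCcvx : Convex ℝ C)
    (hCpne : Cp.Nonempty) (hCpcpt : IsCompact Cp) (hCpcvx : Convex ℝ Cp)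
    (hsub : Cp ⊆ C)
    (θ ystar ystarp : EuclideanSpace ℝ (Fin d))
    (hy : ystar ∈ C) (hymax : ∀ y ∈ C, ⟪θ, y⟫ ≤ ⟪θ, ystar⟫)
    (hyuniq : ∀ y ∈ C, (∀ y' ∈ C, ⟪θ, y'⟫ ≤ ⟪θ, y⟫) → y = ystar)
    (hyp : ystarp ∈ Cp) (hypmax : ∀ y ∈ Cp, ⟪θ, y⟫ ≤ ⟪θ, ystarp⟫)
    (hypuniq : ∀ y ∈ Cp, (∀ y' ∈ Cp, ⟪θ, y'⟫ ≤ ⟪θ, y⟫) → y = ystarp) :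
    HasGradientAt (partialFY C Cp) (ystar - ystarp) θ := by
  have h1 : HasGradientAt (suppFn C) ystar θ :=
    suppFn_hasGradientAt hCne hCcpt hy hymax hyuniq
  have h2 : HasGradientAt (suppFn Cp) ystarp θ :=
    suppFn_hasGradientAt hCpne hCpcpt hyp hypmax hypuniq
  have heq : partialFY C Cp = fun θ' => suppFn C θ' - suppFn Cp θ' := by
    funext θ'
    exact partialFY_eq_sub hCpne hCpcpt θ'
  rw [heq, hasGradientAt_iff_hasFDerivAt]
  have := (h1.hasFDerivAt.sub h2.hasFDerivAt)
  rw [map_sub]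
  exact this
end

section
/- Let Y ⊆ ℝ^d be a finite set with at least one element and Y_p ⊆ Y a nonempty subset, let C = conv(Y) and C(p) = conv(Y_p), let F(θ) = max_{y∈Y} ⟨θ, y⟩ and F(θ; p) = max_{y∈Y_p} ⟨θ, y⟩, let Z be a standard Gaussian random vector on ℝ^d, and let ε > 0. Then the perturbed partial Fenchel–Young loss L̄_{FY,ε}(θ, p) = E[F(θ + εZ) − F(θ + εZ; p)] is differentiable in θ with gradient ∇_θ L̄_{FY,ε}(θ, p) = y*_ε(θ) − y*_ε(θ; p), where y*_ε(θ) = E[argmax_{y∈Y} ⟨y, θ + εZ⟩] and y*_ε(θ; p) = E[argmax_{y∈Y_p} ⟨y, θ + εZ⟩] (the argmaxes being almost surely unique). -/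
open RealInnerProductSpace MeasureTheory ProbabilityTheory

section Aux

lemma gauss_pi_hyperplane_null {n : ℕ} (v : Fin n → ℝ) (hv : v ≠ 0) (c : ℝ) :
    (Measure.pi fun _ : Fin n => gaussianReal 0 1) {x | ∑ i, v i * x i = c} = 0 := by
  obtain ⟨i₀, hi₀⟩ : ∃ i, v i ≠ 0 := Function.ne_iff.mp hv
  cases n with
  | zero => exact absurd i₀.2 (by omega)
  | succ m =>
    set μ : Fin (m + 1) → Measure ℝ := fun _ => gaussianReal 0 1 with hμ
    have hS : MeasurableSet {x : Fin (m+1) → ℝ | ∑ i, v i * x i = c} := by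
      have : Measurable fun x : Fin (m+1) → ℝ => ∑ i, v i * x i :=
        Finset.measurable_sum _ fun i _ => (measurable_pi_apply i).const_mul _
      exact this (measurableSet_singleton c)
    set e := MeasurableEquiv.piFinSuccAbove (fun _ : Fin (m+1) => ℝ) i₀ with he
    have hmp := MeasureTheory.measurePreserving_piFinSuccAbove μ i₀
    set A : Set (ℝ × (Fin m → ℝ)) := e.symm ⁻¹' {x | ∑ i, v i * x i = c} with hA
    have hAm : MeasurableSet A := e.symm.measurable hS
    have h1 : (Measure.pi μ) {x | ∑ i, v i * x i = c}
        = ((μ i₀).prod (Measure.pi fun j => μ (i₀.succAbove j))) A := by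
      rw [← hmp.map_eq, Measure.map_apply e.measurable hAm]
      congr 1
      ext x
      simp [A]
    rw [h1]
    have hswap : ((μ i₀).prod (Measure.pi fun j => μ (i₀.succAbove j))) A
        = ((Measure.pi fun j => μ (i₀.succAbove j)).prod (μ i₀)) (Prod.swap ⁻¹' A) := by
      rw [← Measure.prod_swap, Measure.map_apply measurable_swap hAm]
    rw [hswap]
    rw [Measure.measure_prod_null (measurable_swap hAm)]
    refine Filter.Eventually.of_forall fun r => ?_
    have hset : (Prod.mk r ⁻¹' (Prod.swap ⁻¹' A))
        = {t : ℝ | v i₀ * t + ∑ j, v (i₀.succAbove j) * r j = c} := by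
      ext t
      simp only [Set.mem_preimage, Prod.swap_prod_mk, hA, he, Set.mem_setOf_eq,
        MeasurableEquiv.piFinSuccAbove_symm_apply, Fin.insertNthEquiv_apply]
      rw [Fin.sum_univ_succAbove (fun i => v i * Fin.insertNth (α := fun _ => ℝ) i₀ t r i) i₀]
      simp [Fin.insertNth_apply_same, Fin.insertNth_apply_succAbove]
    show (μ i₀) (Prod.mk r ⁻¹' (Prod.swap ⁻¹' A)) = 0
    rw [hset]
    have hsing : {t : ℝ | v i₀ * t + ∑ j, v (i₀.succAbove j) * r j = c}
        ⊆ {(c - ∑ j, v (i₀.succAbove j) * r j) / v i₀} := by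
      intro t ht
      simp only [Set.mem_setOf_eq] at ht
      simp only [Set.mem_singleton_iff]
      field_simp
      linarith
    refine measure_mono_null hsing ?_
    exact gaussianReal_absolutelyContinuous 0 one_ne_zero (measure_singleton _)

lemma map_eval_pi_prob {ι : Type*} [Fintype ι] [DecidableEq ι] {α : ι → Type*}
    [∀ i, MeasurableSpace (α i)]
    (μ : ∀ i, Measure (α i)) [∀ i, IsProbabilityMeasure (μ i)] (i : ι) :
    (Measure.pi μ).map (Function.eval i) = μ i := by
  ext s hs
  rw [Measure.map_apply (measurable_pi_apply i) hs, Set.eval_preimage, Measure.pi_pi]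
  rw [Fintype.prod_eq_single i (fun j hj => by simp [Function.update_of_ne hj])]
  simp

variable {E : Type*} [NormedAddCommGroup E] [InnerProductSpace ℝ E]

lemma sup_spec (s : Finset E) (x b : E) (hb : b ∈ s)
    (hmax : ∀ y ∈ s, ⟪y, x⟫ ≤ ⟪b, x⟫) :
    sSup ((fun y => ⟪x, y⟫) '' (s : Set E)) = ⟪x, b⟫ := by
  apply le_antisymm
  · apply csSup_le ⟨⟪x, b⟫, Set.mem_image_of_mem _ hb⟩
    rintro a ⟨y, hy, rfl⟩
    rw [real_inner_comm y x, real_inner_comm b x]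
    exact hmax y hy
  · exact le_csSup ((s.finite_toSet.image _).bddAbove) (Set.mem_image_of_mem _ hb)

lemma sup_lip (s : Finset E) (hs : s.Nonempty) {R : ℝ} (hR : ∀ y ∈ s, ‖y‖ ≤ R)
    (x x' : E) :
    sSup ((fun y => ⟪x, y⟫) '' (s : Set E)) - sSup ((fun y => ⟪x', y⟫) '' (s : Set E))
      ≤ R * ‖x - x'‖ := by
  obtain ⟨b, hb, hmax⟩ := s.exists_max_image (fun y => ⟪y, x⟫) hs
  rw [sup_spec s x b hb hmax]
  have h1 : ⟪x', b⟫ ≤ sSup ((fun y => ⟪x', y⟫) '' (s : Set E)) :=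
    le_csSup ((s.finite_toSet.image _).bddAbove) (Set.mem_image_of_mem _ hb)
  have h2 : ⟪x, b⟫ - ⟪x', b⟫ = ⟪x - x', b⟫ := by rw [inner_sub_left]
  have h3 : ⟪x - x', b⟫ ≤ ‖x - x'‖ * ‖b‖ := real_inner_le_norm _ _
  have h4 : ‖x - x'‖ * ‖b‖ ≤ ‖x - x'‖ * R :=
    mul_le_mul_of_nonneg_left (hR b hb) (norm_nonneg _)
  nlinarith [norm_nonneg (x - x')]

lemma sup_abs_le (s : Finset E) (hs : s.Nonempty) {R : ℝ} (hR : ∀ y ∈ s, ‖y‖ ≤ R)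
    (x : E) : |sSup ((fun y => ⟪x, y⟫) '' (s : Set E))| ≤ R * ‖x‖ := by
  obtain ⟨b, hb, hmax⟩ := s.exists_max_image (fun y => ⟪y, x⟫) hs
  rw [sup_spec s x b hb hmax]
  calc |⟪x, b⟫| ≤ ‖x‖ * ‖b‖ := abs_real_inner_le_norm _ _
    _ ≤ ‖x‖ * R := mul_le_mul_of_nonneg_left (hR b hb) (norm_nonneg _)
    _ = R * ‖x‖ := mul_comm _ _

noncomputable def argmaxSel (s : Finset E) : E → E := fun x =>
  ∑ y ∈ s, Set.indicator {z : E | ∀ y' ∈ s, y' ≠ y → ⟪y', z⟫ < ⟪y, z⟫} (fun _ => y) x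

lemma argmaxSel_eq (s : Finset E) (x b : E) (hb : b ∈ s)
    (hstrict : ∀ y' ∈ s, y' ≠ b → ⟪y', x⟫ < ⟪b, x⟫) : argmaxSel s x = b := by
  unfold argmaxSel
  rw [Finset.sum_eq_single_of_mem b hb]
  · have hx : x ∈ {z : E | ∀ y' ∈ s, y' ≠ b → ⟪y', z⟫ < ⟪b, z⟫} := hstrict
    exact Set.indicator_of_mem hx _
  · intro y hy hyb
    apply Set.indicator_of_notMem
    intro hx
    exact absurd (hstrict y hy hyb) (not_lt.mpr (hx b hb (Ne.symm hyb)).le)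

lemma argmaxSel_measurable [MeasurableSpace E] [BorelSpace E] [SecondCountableTopology E]
    (s : Finset E) :
    Measurable (argmaxSel s) := by
  apply Finset.measurable_sum
  intro y _
  apply Measurable.indicator measurable_const
  have : {z : E | ∀ y' ∈ s, y' ≠ y → ⟪y', z⟫ < ⟪y, z⟫}
      = ⋂ y' ∈ s, {z : E | y' ≠ y → ⟪y', z⟫ < ⟪y, z⟫} := by
    ext z; simp
  rw [this]
  refine MeasurableSet.biInter s.countable_toSet fun y' _ => ?_
  by_cases h : y' = y
  · simp [h]
  · have : {z : E | y' ≠ y → ⟪y', z⟫ < ⟪y, z⟫} = {z : E | ⟪y', z⟫ < ⟪y, z⟫} := by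
      ext z; simp [h]
    rw [this]
    exact measurableSet_lt (Continuous.measurable (continuous_const.inner continuous_id))
      (Continuous.measurable (continuous_const.inner continuous_id))

lemma hasFDerivAt_sup (s : Finset E) (c x₀ b : E) (hb : b ∈ s)
    (hstrict : ∀ y' ∈ s, y' ≠ b → ⟪y', x₀ + c⟫ < ⟪b, x₀ + c⟫) :
    HasFDerivAt (fun t => sSup ((fun y => ⟪t + c, y⟫) '' (s : Set E))) (innerSL ℝ b) x₀ := by
  have hv : HasFDerivAt (fun t : E => ⟪t + c, b⟫) (innerSL ℝ b) x₀ := by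
    have heq : (fun t : E => ⟪t + c, b⟫) = fun t => (innerSL ℝ b) t + ⟪c, b⟫ := by
      funext t
      simp only [innerSL_apply_apply, inner_add_left]
      rw [real_inner_comm b t]
    rw [heq]
    exact (innerSL ℝ b).hasFDerivAt.add_const _
  apply hv.congr_of_eventuallyEq
  have hev : ∀ᶠ t in nhds x₀, ∀ y' ∈ s, ⟪y', t + c⟫ ≤ ⟪b, t + c⟫ := by
    rw [Filter.eventually_all_finset]
    intro y' hy'
    by_cases h : y' = b
    · exact Filter.Eventually.of_forall fun t => by rw [h]
    · have hcont : Continuous fun t : E => ⟪b, t + c⟫ - ⟪y', t + c⟫ :=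
        ((continuous_const.inner (continuous_id.add continuous_const)).sub
          (continuous_const.inner (continuous_id.add continuous_const)))
      have hopen : IsOpen {t : E | (0:ℝ) < ⟪b, t + c⟫ - ⟪y', t + c⟫} :=
        isOpen_lt continuous_const hcont
      have hmem : x₀ ∈ {t : E | (0:ℝ) < ⟪b, t + c⟫ - ⟪y', t + c⟫} :=
        sub_pos.mpr (hstrict y' hy' h)
      refine Filter.eventually_of_mem (hopen.mem_nhds hmem) fun t ht => ?_
      have : (0:ℝ) < ⟪b, t + c⟫ - ⟪y', t + c⟫ := ht
      linarith
  exact hev.mono fun t ht => sup_spec s (t + c) b hb ht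

lemma integrable_abs_gaussian : Integrable (fun x : ℝ => |x|) (gaussianReal 0 1) := by
  rw [gaussianReal_of_var_ne_zero 0 one_ne_zero]
  rw [integrable_withDensity_iff (measurable_gaussianPDF 0 1)
    (Filter.Eventually.of_forall fun x => ENNReal.ofReal_lt_top)]
  have hint : Integrable (fun x : ℝ => |x * Real.exp (-(1/2 : ℝ) * x ^ 2)|) volume :=
    (integrable_mul_exp_neg_mul_sq (by norm_num : (0:ℝ) < 1/2)).abs
  have heq : (fun x : ℝ => |x| * ((gaussianPDF 0 1 x).toReal))
      = fun x : ℝ => (Real.sqrt (2 * Real.pi))⁻¹ * |x * Real.exp (-(1/2 : ℝ) * x ^ 2)| := by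
    funext x
    rw [gaussianPDF, ENNReal.toReal_ofReal (gaussianPDFReal_nonneg _ _ _), gaussianPDFReal]
    rw [abs_mul, abs_of_pos (Real.exp_pos _)]
    push_cast
    ring_nf
  rw [show (fun x : ℝ => |x| * ((gaussianPDF 0 1 x).toReal)) = _ from heq]
  exact hint.const_mul _

lemma euclid_norm_le_sum_abs {d : ℕ} (x : EuclideanSpace ℝ (Fin d)) :
    ‖x‖ ≤ ∑ i, |x i| := by
  rw [EuclideanSpace.norm_eq]
  simp only [Real.norm_eq_abs]
  have h1 : ∑ i, |x i| ^ 2 ≤ (∑ i, |x i|) ^ 2 :=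
    Finset.sum_sq_le_sq_sum_of_nonneg fun i _ => abs_nonneg _
  calc Real.sqrt (∑ i, |x i| ^ 2) ≤ Real.sqrt ((∑ i, |x i|) ^ 2) := Real.sqrt_le_sqrt h1
    _ = ∑ i, |x i| := Real.sqrt_sq (Finset.sum_nonneg fun i _ => abs_nonneg _)

end Aux

set_option maxHeartbeats 1000000 in
/-- Let `Y ⊆ ℝ^d` be a nonempty finite set, `Y_p ⊆ Y` nonempty,
`F(θ) = max_{y ∈ Y} ⟨θ, y⟩` and `F(θ; p) = max_{y ∈ Y_p} ⟨θ, y⟩` (the support functions of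
`conv(Y)` and `conv(Y_p)`), `Z` a standard Gaussian on `ℝ^d` and `ε > 0`. Then the perturbed
partial Fenchel–Young loss `L̄_{FY,ε}(θ, p) = E[F(θ + εZ) − F(θ + εZ; p)]` is differentiable
in `θ` with gradient `y*_ε(θ) − y*_ε(θ; p)` where `y*_ε(θ) = E[argmax_{y ∈ Y} ⟨y, θ + εZ⟩]`
and `y*_ε(θ; p) = E[argmax_{y ∈ Y_p} ⟨y, θ + εZ⟩]`, the argmaxes being almost surely unique
(and represented by arbitrary selections `g`, `gp` that almost surely pick the maximizers). -/
theorem perturbed_partialFY_hasGradientAt_gaussian {d : ℕ}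
    (Y Yp : Finset (EuclideanSpace ℝ (Fin d))) (hYp : Yp.Nonempty) (hsub : Yp ⊆ Y)
    {Ω : Type*} [MeasureSpace Ω] [IsProbabilityMeasure (volume : Measure Ω)]
    (Z : Ω → EuclideanSpace ℝ (Fin d))
    (hZ : Measure.map (fun ω => (fun i => Z ω i : Fin d → ℝ)) volume
        = Measure.pi fun _ : Fin d => gaussianReal 0 1)
    (ε : ℝ) (hε : 0 < ε) (θ : EuclideanSpace ℝ (Fin d)) :
    (∀ᵐ ω, ∃! y, y ∈ Y ∧ ∀ y' ∈ Y, ⟪y', θ + ε • Z ω⟫ ≤ ⟪y, θ + ε • Z ω⟫)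
    ∧ (∀ᵐ ω, ∃! y, y ∈ Yp ∧ ∀ y' ∈ Yp, ⟪y', θ + ε • Z ω⟫ ≤ ⟪y, θ + ε • Z ω⟫)
    ∧ ∀ g gp : EuclideanSpace ℝ (Fin d) → EuclideanSpace ℝ (Fin d),
        (∀ᵐ ω, g (θ + ε • Z ω) ∈ Y ∧
          ∀ y ∈ Y, ⟪y, θ + ε • Z ω⟫ ≤ ⟪g (θ + ε • Z ω), θ + ε • Z ω⟫) →
        (∀ᵐ ω, gp (θ + ε • Z ω) ∈ Yp ∧
          ∀ y ∈ Yp, ⟪y, θ + ε • Z ω⟫ ≤ ⟪gp (θ + ε • Z ω), θ + ε • Z ω⟫) →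
        HasGradientAt
          (fun t => ∫ ω,
            (sSup ((fun y => ⟪t + ε • Z ω, y⟫) '' (Y : Set (EuclideanSpace ℝ (Fin d))))
              - sSup ((fun y => ⟪t + ε • Z ω, y⟫) '' (Yp : Set (EuclideanSpace ℝ (Fin d))))))
          ((∫ ω, g (θ + ε • Z ω)) - ∫ ω, gp (θ + ε • Z ω)) θ := by
  classical
  have hYne : Y.Nonempty := hYp.mono hsub
  -- measurability of Z
  have hφ : AEMeasurable (fun ω => (fun i => Z ω i : Fin d → ℝ)) volume := by
    by_contra h
    rw [Measure.map_of_not_aemeasurable h] at hZ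
    have h1 : (0 : Measure (Fin d → ℝ)) Set.univ = 1 := by
      rw [hZ]; exact measure_univ
    simp at h1
  have hZae : AEMeasurable Z volume :=
    (MeasurableEquiv.toLp 2 (Fin d → ℝ)).measurable.comp_aemeasurable hφ
  -- the a.e. pairwise-distinct-inner-products event
  have hne_ae : ∀ᵐ ω, ∀ y ∈ Y, ∀ y' ∈ Y, y ≠ y' →
      ⟪y', θ + ε • Z ω⟫ ≠ ⟪y, θ + ε • Z ω⟫ := by
    rw [Filter.eventually_all_finset]
    intro y hy
    rw [Filter.eventually_all_finset]
    intro y' hy'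
    by_cases hne : y = y'
    · exact Filter.Eventually.of_forall fun ω h => absurd hne h
    · refine Filter.Eventually.mono ?_ (fun ω h _ => h)
      -- the bad event is contained in a hyperplane event
      have hvne : ∃ i, y' i - y i ≠ 0 := by
        by_contra hc
        push_neg at hc
        have hyy : y' = y := by
          ext i
          have := hc i
          linarith
        exact hne hyy.symm
      set v : Fin d → ℝ := fun i => ε * (y' i - y i) with hv
      have hv0 : v ≠ 0 := by
        obtain ⟨i, hi⟩ := hvne
        intro hcon
        have h0 := congrFun hcon i
        simp only [hv, Pi.zero_apply] at h0
        rcases mul_eq_zero.mp h0 with h | h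
        · exact (ne_of_gt hε) h
        · exact hi h
      set c : ℝ := ⟪y, θ⟫ - ⟪y', θ⟫ with hc
      have hSmeas : MeasurableSet {u : Fin d → ℝ | ∑ i, v i * u i = c} := by
        have : Measurable fun u : Fin d → ℝ => ∑ i, v i * u i :=
          Finset.measurable_sum _ fun i _ => (measurable_pi_apply i).const_mul _
        exact this (measurableSet_singleton c)
      rw [ae_iff]
      have hnull : volume ((fun ω => (fun i => Z ω i : Fin d → ℝ)) ⁻¹'
          {u : Fin d → ℝ | ∑ i, v i * u i = c}) = 0 := by
        have hmap := Measure.map_apply_of_aemeasurable hφ hSmeas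
        rw [hZ] at hmap
        rw [← hmap]
        exact gauss_pi_hyperplane_null v hv0 c
      refine measure_mono_null ?_ hnull
      · intro ω hω
        simp only [Set.mem_setOf_eq, not_not] at hω
        simp only [Set.mem_preimage, Set.mem_setOf_eq]
        have hyx : ⟪y', θ + ε • Z ω⟫ = ⟪y', θ⟫ + ε * ∑ i, y' i * Z ω i := by
          rw [inner_add_right, real_inner_smul_right]
          simp [PiLp.inner_apply, RCLike.inner_apply, conj_trivial]
          exact Or.inl (Finset.sum_congr rfl fun i _ => mul_comm _ _)
        have hyx2 : ⟪y, θ + ε • Z ω⟫ = ⟪y, θ⟫ + ε * ∑ i, y i * Z ω i := by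
          rw [inner_add_right, real_inner_smul_right]
          simp [PiLp.inner_apply, RCLike.inner_apply, conj_trivial]
          exact Or.inl (Finset.sum_congr rfl fun i _ => mul_comm _ _)
        rw [hyx, hyx2] at hω
        have : ∑ i, v i * Z ω i = ε * ∑ i, y' i * Z ω i - ε * ∑ i, y i * Z ω i := by
          simp only [hv]
          rw [Finset.mul_sum, Finset.mul_sum, ← Finset.sum_sub_distrib]
          exact Finset.sum_congr rfl fun i _ => by ring
        rw [this, hc]
        linarith
  -- unique maximizers
  have key : ∀ (s : Finset (EuclideanSpace ℝ (Fin d))), s.Nonempty → s ⊆ Y →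
      ∀ ω, (∀ y ∈ Y, ∀ y' ∈ Y, y ≠ y' → ⟪y', θ + ε • Z ω⟫ ≠ ⟪y, θ + ε • Z ω⟫) →
      ∃! y, y ∈ s ∧ ∀ y' ∈ s, ⟪y', θ + ε • Z ω⟫ ≤ ⟪y, θ + ε • Z ω⟫ := by
    intro s hs hsY ω hω
    obtain ⟨b, hb, hmax⟩ := s.exists_max_image (fun y => ⟪y, θ + ε • Z ω⟫) hs
    refine ⟨b, ⟨hb, hmax⟩, ?_⟩
    rintro y₁ ⟨hy₁, hmax₁⟩
    by_contra hne
    exact hω b (hsY hb) y₁ (hsY hy₁) (Ne.symm hne)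
      (le_antisymm (hmax y₁ hy₁) (hmax₁ b hb))
  refine ⟨hne_ae.mono fun ω hω => key Y hYne (subset_refl Y) ω hω,
    hne_ae.mono fun ω hω => key Yp hYp hsub ω hω, ?_⟩
  intro g gp hg hgp
  -- norms bound
  set R : ℝ := Y.sup' hYne fun y => ‖y‖ with hRdef
  have hR : ∀ y ∈ Y, ‖y‖ ≤ R := fun y hy => Finset.le_sup' _ hy
  have hRp : ∀ y ∈ Yp, ‖y‖ ≤ R := fun y hy => hR y (hsub hy)
  have hR0 : 0 ≤ R := le_trans (norm_nonneg _) (hR _ hYne.choose_spec)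
  have hXae : ∀ t : EuclideanSpace ℝ (Fin d),
      AEMeasurable (fun ω => t + ε • Z ω) volume := fun t =>
    (continuous_const.add (continuous_id.const_smul ε)).measurable.comp_aemeasurable hZae
  -- continuity of the support functions
  have hcont : ∀ s : Finset (EuclideanSpace ℝ (Fin d)), s.Nonempty → (∀ y ∈ s, ‖y‖ ≤ R) →
      Continuous fun u : EuclideanSpace ℝ (Fin d) =>
        sSup ((fun y => ⟪u, y⟫) '' (s : Set (EuclideanSpace ℝ (Fin d)))) := by
    intro s hs hRs
    refine (LipschitzWith.of_dist_le_mul (K := Real.toNNReal R) fun u u' => ?_).continuous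
    rw [Real.dist_eq, dist_eq_norm, Real.coe_toNNReal R hR0]
    exact abs_sub_le_iff.mpr ⟨sup_lip s hs hRs u u', by
      have := sup_lip s hs hRs u' u
      rwa [norm_sub_rev] at this⟩
  have hcY := hcont Y hYne hR
  have hcYp := hcont Yp hYp hRp
  -- integrability of ‖Z‖
  have hZnormInt : Integrable (fun ω => ‖Z ω‖) volume := by
    have hi : ∀ i : Fin d, Integrable (fun ω => |Z ω i|) volume := by
      intro i
      have h1 : Integrable (fun u : Fin d → ℝ => |u i|)
          (Measure.pi fun _ : Fin d => gaussianReal 0 1) := by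
        have hmap := map_eval_pi_prob (fun _ : Fin d => gaussianReal 0 1) i
        have h2 : Integrable (fun a : ℝ => |a|)
            ((Measure.pi fun _ : Fin d => gaussianReal 0 1).map (Function.eval i)) := by
          rw [hmap]; exact integrable_abs_gaussian
        exact (integrable_map_measure continuous_abs.measurable.aestronglyMeasurable
          (measurable_pi_apply i).aemeasurable).mp h2
      rw [← hZ] at h1
      exact (integrable_map_measure ((measurable_pi_apply i).abs.aestronglyMeasurable)
        hφ).mp h1
    have hsum : Integrable (fun ω => ∑ i, |Z ω i|) volume :=
      integrable_finset_sum _ fun i _ => hi i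
    refine hsum.mono' hZae.norm.aestronglyMeasurable
      (Filter.Eventually.of_forall fun ω => ?_)
    rw [norm_norm]
    exact euclid_norm_le_sum_abs (Z ω)
  -- a.e. equality of the selections with g, gp
  have hselY_ae : ∀ᵐ ω, argmaxSel Y (θ + ε • Z ω) = g (θ + ε • Z ω) := by
    filter_upwards [hne_ae, hg] with ω hω hgω
    exact argmaxSel_eq Y _ _ hgω.1 fun y' hy' hne =>
      lt_of_le_of_ne (hgω.2 y' hy') (hω (g (θ + ε • Z ω)) hgω.1 y' hy' (Ne.symm hne))
  have hselYp_ae : ∀ᵐ ω, argmaxSel Yp (θ + ε • Z ω) = gp (θ + ε • Z ω) := by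
    filter_upwards [hne_ae, hgp] with ω hω hgω
    exact argmaxSel_eq Yp _ _ hgω.1 fun y' hy' hne =>
      lt_of_le_of_ne (hgω.2 y' hy')
        (hω (gp (θ + ε • Z ω)) (hsub hgω.1) y' (hsub hy') (Ne.symm hne))
  -- integrability of the selections
  have hselYmeas : AEStronglyMeasurable (fun ω => argmaxSel Y (θ + ε • Z ω)) volume :=
    ((argmaxSel_measurable Y).comp_aemeasurable (hXae θ)).aestronglyMeasurable
  have hselYpmeas : AEStronglyMeasurable (fun ω => argmaxSel Yp (θ + ε • Z ω)) volume :=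
    ((argmaxSel_measurable Yp).comp_aemeasurable (hXae θ)).aestronglyMeasurable
  have hselYint : Integrable (fun ω => argmaxSel Y (θ + ε • Z ω)) volume := by
    refine (integrable_const R).mono' hselYmeas ?_
    filter_upwards [hselY_ae, hg] with ω h1 h2
    rw [h1]
    exact hR _ h2.1
  have hselYpint : Integrable (fun ω => argmaxSel Yp (θ + ε • Z ω)) volume := by
    refine (integrable_const R).mono' hselYpmeas ?_
    filter_upwards [hselYp_ae, hgp] with ω h1 h2
    rw [h1]
    exact hRp _ h2.1
  -- the derivative family
  set F' : Ω → EuclideanSpace ℝ (Fin d) →L[ℝ] ℝ := fun ω =>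
    innerSL ℝ (argmaxSel Y (θ + ε • Z ω) - argmaxSel Yp (θ + ε • Z ω)) with hF'def
  have hF'meas : AEStronglyMeasurable F' volume :=
    (innerSL ℝ).continuous.comp_aestronglyMeasurable
      ((hselYint.aestronglyMeasurable.sub hselYpint.aestronglyMeasurable))
  -- dominated differentiation under the integral
  have hmain := hasFDerivAt_integral_of_dominated_loc_of_lip
    (μ := (volume : Measure Ω)) (x₀ := θ)
    (F := fun t ω =>
      sSup ((fun y => ⟪t + ε • Z ω, y⟫) '' (Y : Set (EuclideanSpace ℝ (Fin d))))
        - sSup ((fun y => ⟪t + ε • Z ω, y⟫) '' (Yp : Set (EuclideanSpace ℝ (Fin d)))))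
    (F' := F') (bound := fun _ => 2 * R) (Metric.ball_mem_nhds θ one_pos)
    (Filter.Eventually.of_forall fun t =>
      (((hcY.comp (continuous_const.add (continuous_id.const_smul ε))).sub
        (hcYp.comp (continuous_const.add (continuous_id.const_smul ε)))).measurable.comp_aemeasurable
          hZae).aestronglyMeasurable)
    (by -- integrability at θ
      refine (((integrable_const ‖θ‖).add (hZnormInt.const_mul |ε|)).const_mul
          (2 * R)).mono'
        ((((hcY.comp (continuous_const.add (continuous_id.const_smul ε))).sub
          (hcYp.comp (continuous_const.add
            (continuous_id.const_smul ε)))).measurable.comp_aemeasurable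
            hZae).aestronglyMeasurable)
        (Filter.Eventually.of_forall fun ω => ?_)
      have h1 := sup_abs_le Y hYne hR (θ + ε • Z ω)
      have h2 := sup_abs_le Yp hYp hRp (θ + ε • Z ω)
      have h3 : ‖θ + ε • Z ω‖ ≤ ‖θ‖ + |ε| * ‖Z ω‖ := by
        calc ‖θ + ε • Z ω‖ ≤ ‖θ‖ + ‖ε • Z ω‖ := norm_add_le _ _
          _ = ‖θ‖ + |ε| * ‖Z ω‖ := by rw [norm_smul, Real.norm_eq_abs]
      rw [Real.norm_eq_abs]
      have habs : ∀ a b : ℝ, |a - b| ≤ |a| + |b| := fun a b => by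
        rw [sub_eq_add_neg]
        exact (abs_add_le _ _).trans (by rw [abs_neg])
      refine le_trans (habs _ _) ?_
      simp only [Pi.add_apply]
      linarith [h1, h2, mul_le_mul_of_nonneg_left h3 hR0])
    hF'meas
    (Filter.Eventually.of_forall fun ω => by -- Lipschitz
      apply LipschitzWith.lipschitzOnWith
      refine LipschitzWith.of_dist_le_mul fun t t' => ?_
      rw [Real.dist_eq, dist_eq_norm, Real.coe_nnabs]
      have hab : |2 * R| = 2 * R := abs_of_nonneg (by linarith)
      rw [hab]
      have hd : (t + ε • Z ω) - (t' + ε • Z ω) = t - t' := by abel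
      have h1 := sup_lip Y hYne hR (t + ε • Z ω) (t' + ε • Z ω)
      have h1' := sup_lip Y hYne hR (t' + ε • Z ω) (t + ε • Z ω)
      have h2 := sup_lip Yp hYp hRp (t + ε • Z ω) (t' + ε • Z ω)
      have h2' := sup_lip Yp hYp hRp (t' + ε • Z ω) (t + ε • Z ω)
      rw [hd] at h1 h2
      rw [show (t' + ε • Z ω) - (t + ε • Z ω) = t' - t by abel, norm_sub_rev] at h1' h2'
      rw [abs_le]
      constructor <;> nlinarith)
    (integrable_const _)
    (by -- a.e. differentiability
      filter_upwards [hne_ae, hg, hgp, hselY_ae, hselYp_ae] with ω hω hgω hgpω hs1 hs2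
      have hstrictY : ∀ y' ∈ Y, y' ≠ g (θ + ε • Z ω) →
          ⟪y', θ + ε • Z ω⟫ < ⟪g (θ + ε • Z ω), θ + ε • Z ω⟫ := fun y' hy' hne =>
        lt_of_le_of_ne (hgω.2 y' hy') (hω (g (θ + ε • Z ω)) hgω.1 y' hy' (Ne.symm hne))
      have hstrictYp : ∀ y' ∈ Yp, y' ≠ gp (θ + ε • Z ω) →
          ⟪y', θ + ε • Z ω⟫ < ⟪gp (θ + ε • Z ω), θ + ε • Z ω⟫ := fun y' hy' hne =>
        lt_of_le_of_ne (hgpω.2 y' hy')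
          (hω (gp (θ + ε • Z ω)) (hsub hgpω.1) y' (hsub hy') (Ne.symm hne))
      have hdY := hasFDerivAt_sup Y (ε • Z ω) θ (g (θ + ε • Z ω)) hgω.1 hstrictY
      have hdYp := hasFDerivAt_sup Yp (ε • Z ω) θ (gp (θ + ε • Z ω)) hgpω.1 hstrictYp
      have : F' ω = innerSL ℝ (g (θ + ε • Z ω)) - innerSL ℝ (gp (θ + ε • Z ω)) := by
        rw [hF'def]
        simp only [hs1, hs2, map_sub]
      rw [this]
      exact hdY.sub hdYp)
  obtain ⟨hF'int, hder⟩ := hmain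
  -- identify the derivative
  have hcomm : ∫ ω, F' ω = innerSL ℝ
      ((∫ ω, g (θ + ε • Z ω)) - ∫ ω, gp (θ + ε • Z ω)) := by
    have h1 : ∫ ω, F' ω = innerSL ℝ
        (∫ ω, (argmaxSel Y (θ + ε • Z ω) - argmaxSel Yp (θ + ε • Z ω))) :=
      ContinuousLinearMap.integral_comp_comm (innerSL ℝ) (hselYint.sub hselYpint)
    rw [h1, integral_sub hselYint hselYpint,
      integral_congr_ae hselY_ae, integral_congr_ae hselYp_ae]
  rw [hasGradientAt_iff_hasFDerivAt]
  have htd : (InnerProductSpace.toDual ℝ (EuclideanSpace ℝ (Fin d))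
      ((∫ ω, g (θ + ε • Z ω)) - ∫ ω, gp (θ + ε • Z ω)) :
        EuclideanSpace ℝ (Fin d) →L[ℝ] ℝ)
      = innerSL ℝ ((∫ ω, g (θ + ε • Z ω)) - ∫ ω, gp (θ + ε • Z ω)) := by
    ext w
    simp [InnerProductSpace.toDual_apply_apply, innerSL_apply_apply]
  rw [htd, ← hcomm]
  exact hder
end
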